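/- arXiv:2210.03395 — 4 statements merged into one kernel-verified Lean document; each statement's English description precedes it below -/
import Mathlib

section
/- Every finitely generated residually finite group is Hopfian: if G is a finitely generated residually finite group, then every surjective group homomorphism φ : G → G is injective (hence an isomorphism). -/
/-! Let `φ` be a surjective endomorphism of `G` and `ψ : G →* H` a map to a finite group.
Since `G` is finitely generated, there are only finitely many homomorphisms `G →* H`, and
precomposition with `φ` is injective on them, hence bijective. So `ψ = ψ' ∘ φ` for some `ψ'`,
and `ψ` kills `ker φ`. Residual finiteness then forces `ker φ` to be trivial. -/

namespace MonoidHom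

variable {M N : Type*} [Monoid M] [Monoid N]

theorem finite_of_fg [Monoid.FG M] [Finite N] : Finite (M →* N) := by
  obtain ⟨S, hS⟩ := Monoid.FG.fg_top (M := M)
  refine Finite.of_injective (fun f : M →* N => fun s : S => f s) fun f g hfg => ?_
  exact eq_of_eqOn_denseM hS fun x hx => congrFun hfg ⟨x, hx⟩

theorem exists_comp_eq_of_surjective [Monoid.FG M] [Finite N] {φ : M →* M}
    (hφ : Function.Surjective φ) (ψ : M →* N) : ∃ ψ' : M →* N, ψ'.comp φ = ψ :=
  have := finite_of_fg (M := M) (N := N)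
  Finite.injective_iff_surjective.mp (fun _ _ h => (cancel_right hφ).mp h) ψ

end MonoidHom

/-- Every finitely generated residually finite group is Hopfian. -/
theorem fg_residually_finite_hopfian (G : Type*) [Group G] [Group.FG G]
    (hrf : ∀ g : G, g ≠ 1 → ∃ (H : Type) (_ : Group H) (_ : Finite H) (φ : G →* H), φ g ≠ 1)
    (φ : G →* G) (hφ : Function.Surjective φ) : Function.Injective φ := by
  refine (injective_iff_map_eq_one φ).mpr fun g hg => by_contra fun hg1 => ?_
  obtain ⟨H, _, _, ψ, hψ⟩ := hrf g hg1
  obtain ⟨ψ', rfl⟩ := MonoidHom.exists_comp_eq_of_surjective hφ ψ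
  exact hψ (by rw [MonoidHom.comp_apply, hg, map_one])
end

section
/- A finitely generated free group is Hopfian: every surjective endomorphism of a free group of finite rank is injective. -/
-- reduced words have no adjacent cancelling pair
lemma no_cancel {S : Type*} [DecidableEq S] {L : List (S × Bool)}
    (hL : FreeGroup.reduce L = L)
    {i : ℕ} (hi : i + 1 < L.length) {s : S} {b : Bool}
    (h1 : L[i] = (s, b)) (h2 : L[i+1] = (s, !b)) : False := by
  refine FreeGroup.reduce.not (x := s) (b := b) (L₁ := L)
    (L₂ := L.take i) (L₃ := L.drop (i+2)) ?_
  rw [hL]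
  conv_lhs => rw [← List.take_append_drop i L]
  congr 1
  rw [List.drop_eq_getElem_cons (by omega : i < L.length),
    List.drop_eq_getElem_cons hi, h1, h2]

lemma residually_finite {S : Type*} (w : FreeGroup S) (hw : w ≠ 1) :
    ∃ (n : ℕ) (f : FreeGroup S →* Equiv.Perm (Fin (n+1))), f w ≠ 1 := by
  classical
  set L := w.toWord with hLdef
  have hL : FreeGroup.reduce L = L := FreeGroup.reduce_toWord w
  have hne : L ≠ [] := by simpa [hLdef, FreeGroup.toWord_eq_nil_iff] using hw
  set n := L.length with hn
  have hnpos : 0 < n := List.length_pos_iff.mpr hne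
  set s : Fin n → S := fun i => (L.get i).1 with hs
  set b : Fin n → Bool := fun i => (L.get i).2 with hb
  have hget : ∀ i : Fin n, L[(i:ℕ)] = (s i, b i) := fun i => rfl
  have adj : ∀ (i : Fin n) (hi : (i:ℕ)+1 < n), s i = s ⟨(i:ℕ)+1, hi⟩ →
      b ⟨(i:ℕ)+1, hi⟩ = !b i → False := by
    intro i hi h1 h2
    exact no_cancel hL hi (hget i) (by rw [hget ⟨(i:ℕ)+1, hi⟩, h2, ← h1])
  set In : Fin n → Fin (n+1) := fun i => if b i then i.succ else i.castSucc with hIn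
  set Out : Fin n → Fin (n+1) := fun i => if b i then i.castSucc else i.succ with hOut
  have In_inj : ∀ i j : Fin n, s i = s j → In i = In j → i = j := by
    intro i j hsij h
    have hval : (if b i then (i:ℕ)+1 else (i:ℕ)) = (if b j then (j:ℕ)+1 else (j:ℕ)) := by
      simpa [hIn, Fin.ext_iff, apply_ite Fin.val] using h
    by_cases hbi : b i <;> by_cases hbj : b j
    · rw [if_pos hbi, if_pos hbj] at hval
      exact Fin.ext (by omega)
    · -- j = i+1 : letters (s,true)(s,false)
      rw [if_pos hbi, if_neg hbj] at hval
      exfalso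
      have hlt : (i:ℕ)+1 < n := hval ▸ j.2
      have hij : j = ⟨(i:ℕ)+1, hlt⟩ := Fin.ext hval.symm
      exact adj i hlt (hij ▸ hsij) (by rw [← hij]; simp [hbi, hbj])
    · -- i = j+1 : letters (s,false)(s,true)
      rw [if_neg hbi, if_pos hbj] at hval
      exfalso
      have hlt : (j:ℕ)+1 < n := hval.symm ▸ i.2
      have hij : i = ⟨(j:ℕ)+1, hlt⟩ := Fin.ext hval
      exact adj j hlt (hij ▸ hsij.symm) (by rw [← hij]; simp [hbi, hbj])
    · rw [if_neg hbi, if_neg hbj] at hval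
      exact Fin.ext (by omega)
  have Out_inj : ∀ i j : Fin n, s i = s j → Out i = Out j → i = j := by
    intro i j hsij h
    have hval : (if b i then (i:ℕ) else (i:ℕ)+1) = (if b j then (j:ℕ) else (j:ℕ)+1) := by
      simpa [hOut, Fin.ext_iff, apply_ite Fin.val] using h
    by_cases hbi : b i <;> by_cases hbj : b j
    · rw [if_pos hbi, if_pos hbj] at hval
      exact Fin.ext (by omega)
    · -- i = j+1 : letters (s,true) at i, (s,false) at j, i = j+1? recheck below
      rw [if_pos hbi, if_neg hbj] at hval
      exfalso
      have hlt : (j:ℕ)+1 < n := by omega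
      have hij : i = ⟨(j:ℕ)+1, hlt⟩ := Fin.ext hval
      exact adj j hlt (hij ▸ hsij.symm) (by rw [← hij]; simp [hbi, hbj])
    · -- j = i+1
      rw [if_neg hbi, if_pos hbj] at hval
      exfalso
      have hlt : (i:ℕ)+1 < n := by omega
      have hij : j = ⟨(i:ℕ)+1, hlt⟩ := Fin.ext hval.symm
      exact adj i hlt (hij ▸ hsij) (by rw [← hij]; simp [hbi, hbj])
    · rw [if_neg hbi, if_neg hbj] at hval
      exact Fin.ext (by omega)
  have eIn : ∀ s₀ : S, ∃ e : {i : Fin n // s i = s₀} ≃ {x : Fin (n+1) // ∃ i, s i = s₀ ∧ In i = x}, ∀ i, (e i : Fin (n+1)) = In i.1 := by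
    intro s₀
    refine ⟨Equiv.ofBijective (fun i => ⟨In i.1, i.1, i.2, rfl⟩) ⟨?_, ?_⟩, fun i => rfl⟩
    · rintro ⟨i, hi⟩ ⟨j, hj⟩ h
      simp only [Subtype.mk.injEq] at h ⊢
      exact In_inj i j (hi.trans hj.symm) h
    · rintro ⟨x, i, hi, rfl⟩
      exact ⟨⟨i, hi⟩, rfl⟩
  choose eIn eIn_spec using eIn
  have eOut : ∀ s₀ : S, ∃ e : {i : Fin n // s i = s₀} ≃ {x : Fin (n+1) // ∃ i, s i = s₀ ∧ Out i = x}, ∀ i, (e i : Fin (n+1)) = Out i.1 := by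
    intro s₀
    refine ⟨Equiv.ofBijective (fun i => ⟨Out i.1, i.1, i.2, rfl⟩) ⟨?_, ?_⟩, fun i => rfl⟩
    · rintro ⟨i, hi⟩ ⟨j, hj⟩ h
      simp only [Subtype.mk.injEq] at h ⊢
      exact Out_inj i j (hi.trans hj.symm) h
    · rintro ⟨x, i, hi, rfl⟩
      exact ⟨⟨i, hi⟩, rfl⟩
  choose eOut eOut_spec using eOut
  set π : S → Equiv.Perm (Fin (n+1)) :=
    fun s₀ => ((eIn s₀).symm.trans (eOut s₀)).extendSubtype with hπ
  have hπ_app : ∀ i : Fin n, π (s i) (In i) = Out i := by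
    intro i
    have hmem : ∃ j, s j = s i ∧ In j = In i := ⟨i, rfl, rfl⟩
    rw [hπ]
    rw [Equiv.extendSubtype_apply_of_mem _ (In i) hmem]
    have h1 : (eIn (s i)).symm ⟨In i, hmem⟩ = ⟨i, rfl⟩ := by
      rw [Equiv.symm_apply_eq]
      exact Subtype.ext (eIn_spec (s i) ⟨i, rfl⟩).symm
    simp only [Equiv.trans_apply, h1]
    exact eOut_spec (s i) ⟨i, rfl⟩
  refine ⟨n, FreeGroup.lift π, ?_⟩
  set g : S × Bool → Equiv.Perm (Fin (n+1)) := fun x => cond x.2 (π x.1) (π x.1)⁻¹ with hg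
  have hσ : ∀ i : Fin n, g (L.get i) (i.succ) = i.castSucc := by
    intro i
    have hπi := hπ_app i
    have hLg : L.get i = (s i, b i) := rfl
    rw [hLg]
    show (cond (b i) (π (s i)) (π (s i))⁻¹) i.succ = i.castSucc
    by_cases hbi : b i
    · have hIn' : In i = i.succ := if_pos hbi
      have hOut' : Out i = i.castSucc := if_pos hbi
      rw [hbi]
      simp only [cond_true]
      rw [← hIn', hπi, hOut']
    · have hbF : b i = false := by simpa using hbi
      have hIn' : In i = i.castSucc := if_neg hbi
      have hOut' : Out i = i.succ := if_neg hbi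
      rw [hbF]
      simp only [cond_false]
      rw [← hOut', ← hπi, ← hIn', Equiv.Perm.inv_def, Equiv.symm_apply_apply]
  have key : ∀ (M : List (S × Bool)) (j : ℕ) (hj : j + M.length = n),
      M = L.drop j → (M.map g).prod ⟨n, n.lt_succ_self⟩ = ⟨j, by omega⟩ := by
    intro M
    induction M with
    | nil => intro j hj _; simp at hj ⊢; omega
    | cons hd M' ih =>
      intro j hj hM
      have hjn : j < n := by simp at hj; omega
      have hdrop : L.drop j = L[j] :: L.drop (j+1) := List.drop_eq_getElem_cons hjn
      rw [hdrop] at hM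
      have hhd : hd = L[j] := (List.cons.injEq .. ▸ hM).1
      have hM' : M' = L.drop (j+1) := (List.cons.injEq .. ▸ hM).2
      have ih' := ih (j+1) (by simp at hj ⊢; omega) hM'
      simp only [List.map_cons, List.prod_cons, Equiv.Perm.mul_apply, ih']
      have hstep : (⟨j+1, by omega⟩ : Fin (n+1)) = (⟨j, hjn⟩ : Fin n).succ := rfl
      rw [hhd, hstep]
      have hσ' := hσ ⟨j, hjn⟩
      simp only [List.get_eq_getElem] at hσ'
      rw [hσ']
      rfl
  have hfw : FreeGroup.lift π w = (L.map g).prod := by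
    conv_lhs => rw [← FreeGroup.mk_toWord (x := w)]
    rw [FreeGroup.lift_mk]
  intro hcon
  have h0 := key L 0 (by simp [hn]) (by simp)
  rw [hfw] at hcon
  rw [hcon] at h0
  simp only [Equiv.Perm.one_apply, Fin.mk.injEq] at h0
  omega

/-- A finitely generated free group is Hopfian. -/
theorem freeGroup_finite_hopfian (S : Type*) [Finite S]
    (φ : FreeGroup S →* FreeGroup S) (hφ : Function.Surjective φ) :
    Function.Injective φ := by
  rw [← MonoidHom.ker_eq_bot_iff]
  rw [Subgroup.eq_bot_iff_forall]
  intro g hg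
  by_contra hgne
  obtain ⟨n, f, hf⟩ := residually_finite g hgne
  have : Finite (FreeGroup S →* Equiv.Perm (Fin (n+1))) :=
    Finite.of_equiv _ FreeGroup.lift
  have hinj : Function.Injective
      (fun h : FreeGroup S →* Equiv.Perm (Fin (n+1)) => h.comp φ) := by
    intro h1 h2 hh
    exact (MonoidHom.cancel_right hφ).mp hh
  obtain ⟨h, hh⟩ := (Finite.injective_iff_surjective.mp hinj) f
  apply hf
  calc f g = (h.comp φ) g := by rw [← hh]
    _ = h (φ g) := rfl
    _ = 1 := by rw [MonoidHom.mem_ker.mp hg]; simp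
end

section
/- Free groups are residually finite: for every set S and every nontrivial element g of the free group F(S), there exists a homomorphism φ from F(S) to a finite group with φ(g) ≠ 1. -/
set_option maxHeartbeats 4000000


/-- Free groups are residually finite. -/
theorem freeGroup_residually_finite (S : Type*) (g : FreeGroup S) (hg : g ≠ 1) :
    ∃ (H : Type) (_ : Group H) (_ : Finite H) (φ : FreeGroup S →* H), φ g ≠ 1 := by
  classical
  set L : List (S × Bool) := g.toWord with hL
  set n : ℕ := L.length with hn
  have hLne : L ≠ [] := by
    simpa [hL, FreeGroup.toWord_eq_nil_iff] using hg
  have hnpos : 0 < n := List.length_pos_iff.mpr hLne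
  have hgetcongr : ∀ (a b : ℕ) (ha : a < n) (hb : b < n), a = b → L[a]'ha = L[b]'hb := by
    intro a b ha hb h; subst h; rfl
  have hr : FreeGroup.reduce L = L := by rw [hL]; exact FreeGroup.reduce_toWord g
  clear_value L
  -- reducedness: no adjacent cancelling pair
  have hred' : ∀ (p q : Fin n), (q : ℕ) = (p : ℕ) + 1 →
      (L[(q : ℕ)]'q.isLt).1 = (L[(p : ℕ)]'p.isLt).1 →
      (L[(q : ℕ)]'q.isLt).2 = !(L[(p : ℕ)]'p.isLt).2 → False := by
    intro p q hqp h1 h2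
    have hq2 : (q : ℕ) < n := q.isLt
    have hsplit : L = L.take (p : ℕ) ++
        (L[(p : ℕ)]'p.isLt) :: (L[(q : ℕ)]'q.isLt) :: L.drop ((p : ℕ) + 2) := by
      conv_lhs => rw [← List.take_append_drop (p : ℕ) L]
      congr 1
      rw [List.drop_eq_getElem_cons (p.isLt)]
      congr 1
      rw [List.drop_eq_getElem_cons (by omega)]
      congr 1
      exact hgetcongr _ _ _ _ (by omega)
    have e2 : (L[(q : ℕ)]'q.isLt) = ((L[(p : ℕ)]'p.isLt).1, !(L[(p : ℕ)]'p.isLt).2) := by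
      rw [← h1, ← h2]
    exact FreeGroup.reduce.not (L₂ := L.take (p : ℕ)) (L₃ := L.drop ((p : ℕ) + 2))
      (x := (L[(p : ℕ)]'p.isLt).1) (b := (L[(p : ℕ)]'p.isLt).2)
      (hr.trans (hsplit.trans (by rw [e2])))
  -- construct the permutations
  have hσ : ∀ s : S, ∃ σ : Equiv.Perm (Fin (n + 1)),
      ∀ p : Fin n,
        ((L[(p : ℕ)]'p.isLt) = (s, true) → σ p.succ = p.castSucc) ∧
        ((L[(p : ℕ)]'p.isLt) = (s, false) → σ p.castSucc = p.succ) := by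
    intro s
    set P := {p : Fin n // (L[(p : ℕ)]'p.isLt).1 = s} with hP
    set src : P → Fin (n + 1) :=
      fun p => if (L[(p.1 : ℕ)]'p.1.isLt).2 = true then p.1.succ else p.1.castSucc with hsrcdef
    set tgt : P → Fin (n + 1) :=
      fun p => if (L[(p.1 : ℕ)]'p.1.isLt).2 = true then p.1.castSucc else p.1.succ with htgtdef
    have hsrc : Function.Injective src := by
      rintro ⟨p, hp⟩ ⟨q, hq⟩ hpq
      have hpq' : (if (L[(p : ℕ)]'p.isLt).2 = true then p.succ else p.castSucc)
          = (if (L[(q : ℕ)]'q.isLt).2 = true then q.succ else q.castSucc) := hpq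
      split_ifs at hpq' with bp bq bq
      · exact Subtype.ext (Fin.succ_injective _ hpq')
      · exfalso
        have hval : (q : ℕ) = (p : ℕ) + 1 := by
          have := congrArg Fin.val hpq'; simpa using this.symm
        refine hred' p q hval (by rw [hp, hq]) ?_
        simp only [Bool.not_eq_true] at bq
        rw [bq, bp]
        rfl
      · exfalso
        have hval : (p : ℕ) = (q : ℕ) + 1 := by
          have := congrArg Fin.val hpq'; simpa using this
        refine hred' q p hval (by rw [hp, hq]) ?_
        simp only [Bool.not_eq_true] at bp
        rw [bq, bp]
        rfl
      · exact Subtype.ext (Fin.castSucc_injective _ hpq')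
    have htgt : Function.Injective tgt := by
      rintro ⟨p, hp⟩ ⟨q, hq⟩ hpq
      have hpq' : (if (L[(p : ℕ)]'p.isLt).2 = true then p.castSucc else p.succ)
          = (if (L[(q : ℕ)]'q.isLt).2 = true then q.castSucc else q.succ) := hpq
      split_ifs at hpq' with bp bq bq
      · exact Subtype.ext (Fin.castSucc_injective _ hpq')
      · exfalso
        have hval : (p : ℕ) = (q : ℕ) + 1 := by
          have := congrArg Fin.val hpq'; simpa using this
        refine hred' q p hval (by rw [hp, hq]) ?_
        simp only [Bool.not_eq_true] at bq
        rw [bq, bp]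
        rfl
      · exfalso
        have hval : (q : ℕ) = (p : ℕ) + 1 := by
          have := congrArg Fin.val hpq'; simpa using this.symm
        refine hred' p q hval (by rw [hp, hq]) ?_
        simp only [Bool.not_eq_true] at bp
        rw [bq, bp]
        rfl
      · exact Subtype.ext (Fin.succ_injective _ hpq')
    set e : {x : Fin (n + 1) // x ∈ Set.range src} ≃ {x : Fin (n + 1) // x ∈ Set.range tgt} :=
      (Equiv.ofInjective src hsrc).symm.trans (Equiv.ofInjective tgt htgt) with hedef
    refine ⟨Equiv.extendSubtype e, ?_⟩
    intro p
    have happ : ∀ hp : (L[(p : ℕ)]'p.isLt).1 = s,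
        Equiv.extendSubtype e (src ⟨p, hp⟩) = tgt ⟨p, hp⟩ := by
      intro hp
      rw [Equiv.extendSubtype_apply_of_mem e (src ⟨p, hp⟩) ⟨⟨p, hp⟩, rfl⟩]
      simp [hedef]
    constructor
    · intro hb
      have hp : (L[(p : ℕ)]'p.isLt).1 = s := by rw [hb]
      have h1 : src ⟨p, hp⟩ = p.succ := by
        show (if (L[(p : ℕ)]'p.isLt).2 = true then p.succ else p.castSucc) = p.succ
        rw [hb]
        rfl
      have h2 : tgt ⟨p, hp⟩ = p.castSucc := by
        show (if (L[(p : ℕ)]'p.isLt).2 = true then p.castSucc else p.succ) = p.castSucc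
        rw [hb]
        rfl
      have := happ hp
      rw [h1, h2] at this
      exact this
    · intro hb
      have hp : (L[(p : ℕ)]'p.isLt).1 = s := by rw [hb]
      have h1 : src ⟨p, hp⟩ = p.castSucc := by
        show (if (L[(p : ℕ)]'p.isLt).2 = true then p.succ else p.castSucc) = p.castSucc
        rw [hb]
        rfl
      have h2 : tgt ⟨p, hp⟩ = p.succ := by
        show (if (L[(p : ℕ)]'p.isLt).2 = true then p.castSucc else p.succ) = p.succ
        rw [hb]
        rfl
      have := happ hp
      rw [h1, h2] at this
      exact this
  choose σ hσspec using hσ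
  -- key computation
  have key : ∀ (M : List (S × Bool)) (j : ℕ) (hj : j + M.length ≤ n)
      (hM : ∀ i (hi : i < M.length), M.get ⟨i, hi⟩ = L[j + i]'(by omega)),
      (M.map fun x => cond x.2 (σ x.1) (σ x.1)⁻¹).prod ⟨j + M.length, by omega⟩
        = ⟨j, by omega⟩ := by
    intro M
    induction M with
    | nil => intro j hj hM; simp
    | cons a M ih =>
      intro j hj hM
      have hj' : (j + 1) + M.length ≤ n := by simp at hj; omega
      have hM' : ∀ i (hi : i < M.length), M.get ⟨i, hi⟩ = L[(j + 1) + i]'(by omega) := by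
        intro i hi
        have h0 := hM (i + 1) (by simp; omega)
        simp only [List.get_cons_succ] at h0
        rw [h0]
        exact hgetcongr _ _ _ _ (by omega)
      have hstep := ih (j + 1) hj' hM'
      rw [List.map_cons, List.prod_cons, Equiv.Perm.mul_apply]
      have harg : (⟨j + (a :: M).length, by simp; omega⟩ : Fin (n + 1))
          = ⟨(j + 1) + M.length, by omega⟩ := Fin.ext (by simp; omega)
      rw [harg, hstep]
      have hjn : j < n := by simp at hj; omega
      have ha : a = L[j]'hjn := by
        have h0 := hM 0 (by simp)
        exact h0.trans (hgetcongr _ _ _ _ (by omega))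
      have hsucc : (⟨j, hjn⟩ : Fin n).succ = (⟨j + 1, by omega⟩ : Fin (n + 1)) :=
        Fin.ext rfl
      have hcast : (⟨j, hjn⟩ : Fin n).castSucc = (⟨j, by omega⟩ : Fin (n + 1)) :=
        Fin.ext rfl
      cases hb : a.2 with
      | true =>
        have hb' : (L[((⟨j, hjn⟩ : Fin n) : ℕ)]'(⟨j, hjn⟩ : Fin n).isLt) = (a.1, true) := by
          rw [← hb]
          exact (hgetcongr _ _ _ _ rfl).trans ha.symm
        have h1 : σ a.1 (⟨j, hjn⟩ : Fin n).succ = (⟨j, hjn⟩ : Fin n).castSucc :=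
          (hσspec a.1 ⟨j, hjn⟩).1 hb'
        exact h1
      | false =>
        have hb' : (L[((⟨j, hjn⟩ : Fin n) : ℕ)]'(⟨j, hjn⟩ : Fin n).isLt) = (a.1, false) := by
          rw [← hb]
          exact (hgetcongr _ _ _ _ rfl).trans ha.symm
        have h2 : σ a.1 (⟨j, hjn⟩ : Fin n).castSucc = (⟨j, hjn⟩ : Fin n).succ :=
          (hσspec a.1 ⟨j, hjn⟩).2 hb'
        exact ((σ a.1).symm_apply_eq).mpr h2.symm
  refine ⟨Equiv.Perm (Fin (n + 1)), inferInstance, inferInstance, FreeGroup.lift σ, ?_⟩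
  intro hone
  have h1 : FreeGroup.lift σ g = (L.map fun x => cond x.2 (σ x.1) (σ x.1)⁻¹).prod := by
    conv_lhs => rw [← FreeGroup.mk_toWord (x := g), ← hL]
    rw [FreeGroup.lift_mk]
  have h2 := key L 0 (by omega) (fun i hi => by
    rw [List.get_eq_getElem]
    exact hgetcongr _ _ _ _ (by simp))
  rw [← h1, hone] at h2
  simp only [Equiv.Perm.one_apply] at h2
  have h3 : 0 + n = 0 := congrArg Fin.val h2
  omega
end

section
/- Let 𝓔 be a compact metrizable totally disconnected topological space whose set 𝓘 of isolated points is infinite, and let 𝓕 be a finite set disjoint from 𝓔. Then the disjoint union 𝓔 ⊔ 𝓕 (with 𝓕 given points accumulating appropriately, i.e., 𝓔 ∪ 𝓕 viewed as a subspace of a space in which points of 𝓕 are isolated) is homeomorphic to 𝓔. Concretely: if 𝓔 is a closed totally disconnected subset of the 2-sphere with infinitely many isolated points and 𝓕 ⊆ S² \ 𝓔 is finite, then 𝓔 ∪ 𝓕 is homeomorphic to 𝓔. -/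
open Topology Filter Set

/-- In a metric space, an accumulation point of a set `I` admits an injective sequence in `I`
converging to it, with strictly decreasing distances. -/
theorem exists_acc_seq_aux {S : Type*} [MetricSpace S] {I : Set S} {p : S}
    (hp : AccPt p (Filter.principal I)) :
    ∃ x : ℕ → S, (∀ k, x k ∈ I) ∧ (∀ k, x k ≠ p) ∧
      (∀ j k, j ≤ k → dist (x k) p ≤ dist (x j) p) ∧
      (∀ j k, j < k → dist (x k) p < dist (x j) p) ∧
      Filter.Tendsto x Filter.atTop (𝓝 p) := by
  have hsel : ∀ ε : ℝ, 0 < ε → ∃ q : S, q ∈ I ∧ q ≠ p ∧ dist q p < ε := by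
    intro ε hε
    obtain ⟨q, ⟨hq1, hq2⟩, hq3⟩ :=
      accPt_iff_nhds.mp hp (Metric.ball p ε) (Metric.ball_mem_nhds p hε)
    exact ⟨q, hq2, hq3, by simpa [Metric.mem_ball] using hq1⟩
  have hstep : ∀ q : {q : S // q ∈ I ∧ q ≠ p}, ∃ r : {q : S // q ∈ I ∧ q ≠ p},
      dist r.1 p < dist q.1 p / 2 := by
    intro q
    have hpos : 0 < dist q.1 p / 2 := by
      have := dist_pos.mpr q.2.2; linarith
    obtain ⟨r, h1, h2, h3⟩ := hsel _ hpos
    exact ⟨⟨r, h1, h2⟩, h3⟩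
  choose step hstep2 using hstep
  obtain ⟨q0, h01, h02, _⟩ := hsel 1 one_pos
  set xt : ℕ → {q : S // q ∈ I ∧ q ≠ p} := fun k => step^[k] ⟨q0, h01, h02⟩ with hxt
  have hsucc : ∀ k, dist (xt (k + 1)).1 p < dist (xt k).1 p / 2 := by
    intro k
    have h : xt (k + 1) = step (xt k) := by
      simp only [hxt, Function.iterate_succ_apply']
    rw [h]
    exact hstep2 (xt k)
  have hmono : ∀ j k, j ≤ k → dist (xt k).1 p ≤ dist (xt j).1 p := by
    intro j k hjk
    induction k, hjk using Nat.le_induction with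
    | base => exact le_refl _
    | succ m hm ih =>
        exact ((hsucc m).le.trans (half_le_self dist_nonneg)).trans ih
  have hstrict : ∀ j k, j < k → dist (xt k).1 p < dist (xt j).1 p := by
    intro j k hjk
    calc dist (xt k).1 p ≤ dist (xt (j + 1)).1 p := hmono _ _ hjk
      _ < dist (xt j).1 p / 2 := hsucc j
      _ ≤ dist (xt j).1 p := half_le_self dist_nonneg
  have hbound : ∀ k, dist (xt k).1 p ≤ dist (xt 0).1 p * (1 / 2 : ℝ) ^ k := by
    intro k
    induction k with
    | zero => simp
    | succ m ih =>
        have h1 := hsucc m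
        have : dist (xt m).1 p / 2 ≤ dist (xt 0).1 p * (1 / 2 : ℝ) ^ m / 2 := by linarith
        calc dist (xt (m + 1)).1 p ≤ dist (xt 0).1 p * (1 / 2 : ℝ) ^ m / 2 :=
              le_trans h1.le this
          _ = dist (xt 0).1 p * (1 / 2 : ℝ) ^ (m + 1) := by ring
  have htend : Filter.Tendsto (fun k => (xt k).1) Filter.atTop (𝓝 p) := by
    rw [tendsto_iff_dist_tendsto_zero]
    have hlim : Filter.Tendsto (fun k : ℕ => dist (xt 0).1 p * (1 / 2 : ℝ) ^ k)
        Filter.atTop (𝓝 0) := by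
      have := (tendsto_pow_atTop_nhds_zero_of_lt_one (by norm_num : (0:ℝ) ≤ 1 / 2)
        (by norm_num : (1 / 2 : ℝ) < 1)).const_mul (dist (xt 0).1 p)
      simpa using this
    exact squeeze_zero (fun k => dist_nonneg) hbound hlim
  exact ⟨fun k => (xt k).1, fun k => (xt k).2.1, fun k => (xt k).2.2, hmono, hstrict, htend⟩

/-- Abstract version: in a compact metric space, adjoining a finite set of isolated points
to a closed set with infinitely many isolated points does not change its homeomorphism type. -/
theorem union_finite_homeomorph_self_aux {S : Type*} [MetricSpace S] [CompactSpace S]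
    (E F : Set S) (hE : IsClosed E)
    (hiso : {x | x ∈ E ∧ 𝓝[E \ {x}] x = ⊥}.Infinite)
    (hF : F.Finite) (hdisj : F ⊆ Eᶜ) :
    Nonempty (↥(E ∪ F) ≃ₜ ↥E) := by
  classical
  set I : Set S := {x | x ∈ E ∧ 𝓝[E \ {x}] x = ⊥} with hIdef
  obtain ⟨p, hp⟩ := hiso.exists_accPt_principal
  haveI : Nonempty S := ⟨p⟩
  have hpE : p ∈ E := by
    have h1 : p ∈ closure I := mem_closure_iff_clusterPt.mpr (hp.clusterPt)
    have h2 : closure I ⊆ closure E := closure_mono (fun q hq => hq.1)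
    exact hE.closure_eq ▸ h2 h1
  obtain ⟨x, hxI, hxp, hmono, hstrict, hxlim⟩ := exists_acc_seq_aux hp
  have hxE : ∀ k, x k ∈ E := fun k => (hxI k).1
  have hxinj : Function.Injective x := by
    intro a b hab
    by_contra hne
    rcases Nat.lt_or_ge a b with h | h
    · exact absurd (hab ▸ hstrict a b h) (lt_irrefl _)
    · have h' : b < a := lt_of_le_of_ne h (Ne.symm hne)
      exact absurd (hab ▸ hstrict b a h') (lt_irrefl _)
  obtain ⟨n, y, hyr⟩ := hF.fin_embedding
  have hyF : ∀ i, (y i : S) ∈ F := fun i => hyr ▸ Set.mem_range_self i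
  have hxy : ∀ k i, x k ≠ y i := by
    intro k i h
    exact hdisj (hyF i) (h ▸ hxE k)
  -- the combined sequence
  set w : ℕ → S := fun k => if h : k < n then y ⟨k, h⟩ else x (k - n) with hwdef
  have hw_lt : ∀ k (h : k < n), w k = y ⟨k, h⟩ := fun k h => dif_pos h
  have hw_ge : ∀ k, n ≤ k → w k = x (k - n) := fun k h => dif_neg (not_lt.mpr h)
  have hwinj : Function.Injective w := by
    intro a b hab
    by_cases ha : a < n <;> by_cases hb : b < n
    · rw [hw_lt a ha, hw_lt b hb] at hab
      exact congrArg Fin.val (y.injective hab)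
    · rw [hw_lt a ha, hw_ge b (not_lt.mp hb)] at hab
      exact absurd hab.symm (hxy _ _)
    · rw [hw_ge a (not_lt.mp ha), hw_lt b hb] at hab
      exact absurd hab (hxy _ _)
    · rw [hw_ge a (not_lt.mp ha), hw_ge b (not_lt.mp hb)] at hab
      have := hxinj hab
      omega
  have hrw : Set.range w = F ∪ Set.range x := by
    ext z
    constructor
    · rintro ⟨k, rfl⟩
      by_cases h : k < n
      · exact Or.inl (hw_lt k h ▸ hyF ⟨k, h⟩)
      · exact Or.inr (hw_ge k (not_lt.mp h) ▸ Set.mem_range_self _)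
    · rintro (hz | ⟨k, rfl⟩)
      · obtain ⟨i, rfl⟩ := hyr ▸ hz
        exact ⟨i.val, by rw [hw_lt i.val i.isLt]⟩
      · exact ⟨n + k, by rw [hw_ge (n + k) (Nat.le_add_right n k)]; congr 1; omega⟩
  have hinv : ∀ k, Function.invFun w (w k) = k := fun k => Function.leftInverse_invFun hwinj k
  -- the maps
  set f0 : S → S := fun z => if z ∈ Set.range w then w (Function.invFun w z + n) else z
    with hf0def
  set g0 : S → S := fun z => if z ∈ Set.range w then w (Function.invFun w z - n) else z
    with hg0def
  have hf0w : ∀ k, f0 (w k) = w (k + n) := by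
    intro k
    simp only [hf0def, if_pos (Set.mem_range_self k), hinv]
  have hf0id : ∀ z, z ∉ Set.range w → f0 z = z := by
    intro z hz
    simp only [hf0def, if_neg hz]
  have hg0w : ∀ k, g0 (w k) = w (k - n) := by
    intro k
    simp only [hg0def, if_pos (Set.mem_range_self k), hinv]
  have hg0id : ∀ z, z ∉ Set.range w → g0 z = z := by
    intro z hz
    simp only [hg0def, if_neg hz]
  have hwE : ∀ k, n ≤ k → w k ∈ E := fun k h => hw_ge k h ▸ hxE (k - n)
  have hwEF : ∀ k, w k ∈ E ∪ F := by
    intro k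
    by_cases h : k < n
    · exact Or.inr (hw_lt k h ▸ hyF ⟨k, h⟩)
    · exact Or.inl (hwE k (not_lt.mp h))
  have hf0mem : ∀ z, z ∈ E ∪ F → f0 z ∈ E := by
    intro z hz
    by_cases hzw : z ∈ Set.range w
    · obtain ⟨k, rfl⟩ := hzw
      rw [hf0w k]
      exact hwE (k + n) (Nat.le_add_left n k)
    · rw [hf0id z hzw]
      rcases hz with h | h
      · exact h
      · exact absurd (hrw ▸ Or.inl h) hzw
  have hg0mem : ∀ z, z ∈ E → g0 z ∈ E ∪ F := by
    intro z hz
    by_cases hzw : z ∈ Set.range w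
    · obtain ⟨k, rfl⟩ := hzw
      rw [hg0w k]
      rcases hwEF (k - n) with h | h
      · exact Or.inl h
      · exact Or.inr h
    · rw [hg0id z hzw]
      exact Or.inl hz
  have hgf : ∀ z, g0 (f0 z) = z := by
    intro z
    by_cases hzw : z ∈ Set.range w
    · obtain ⟨k, rfl⟩ := hzw
      rw [hf0w k, hg0w (k + n)]
      congr 1
      omega
    · rw [hf0id z hzw, hg0id z hzw]
  have hfg : ∀ z, z ∈ E → f0 (g0 z) = z := by
    intro z hz
    by_cases hzw : z ∈ Set.range w
    · obtain ⟨k, rfl⟩ := hzw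
      have hk : n ≤ k := by
        by_contra h
        have hkn : k < n := not_le.mp h
        have : w k ∈ F := by rw [hw_lt k hkn]; exact hyF _
        exact hdisj this hz
      rw [hg0w k, hf0w (k - n)]
      congr 1
      omega
    · rw [hg0id z hzw, hf0id z hzw]
  -- closedness facts
  have hFc : IsClosed F := hF.isClosed
  have hbot : ∀ (s : Set S) (z : S), IsClosed s → z ∉ s → 𝓝[s] z = ⊥ := by
    intro s z hs hz
    exact inf_principal_eq_bot.mpr (hs.isOpen_compl.mem_nhds hz)
  have hpF : p ∉ F := fun h => hdisj h hpE
  have hpw : p ∉ Set.range w := by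
    rw [hrw]
    rintro (h | ⟨k, hk⟩)
    · exact hpF h
    · exact hxp k hk
  have hclosedT : IsClosed (insert p (Set.range x)) :=
    hxlim.isCompact_insert_range.isClosed
  -- continuity
  have hcont : ContinuousOn f0 (E ∪ F) := by
    intro z hz
    by_cases hzw : z ∈ Set.range w
    · -- isolated point
      have hle : 𝓝[E ∪ F] z ≤ pure z := by
        rw [nhdsWithin_union]
        obtain ⟨k, rfl⟩ := hzw
        by_cases hk : k < n
        · have hzF : w k ∈ F := hw_lt k hk ▸ hyF ⟨k, hk⟩
          have hzE : w k ∉ E := hdisj hzF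
          have h1 : 𝓝[E] (w k) = ⊥ := hbot E _ hE hzE
          have h2 : 𝓝[F] (w k) = pure (w k) := by
            have hins : insert (w k) (F \ {w k}) = F := by
              rw [Set.insert_diff_singleton, Set.insert_eq_self.mpr hzF]
            have hF' : 𝓝[F \ {w k}] (w k) = ⊥ :=
              hbot _ _ ((hF.diff).isClosed) (fun h => h.2 rfl)
            calc 𝓝[F] (w k) = 𝓝[insert (w k) (F \ {w k})] (w k) := by rw [hins]
              _ = pure (w k) ⊔ 𝓝[F \ {w k}] (w k) := nhdsWithin_insert _ _
              _ = pure (w k) := by rw [hF', sup_bot_eq]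
          rw [h1, h2]
          simp
        · have hk' : n ≤ k := not_lt.mp hk
          have hzx : w k = x (k - n) := hw_ge k hk'
          have hzE : w k ∈ E := hwE k hk'
          have hzF : w k ∉ F := fun h => hdisj h hzE
          have h1 : 𝓝[F] (w k) = ⊥ := hbot F _ hFc hzF
          have h2 : 𝓝[E] (w k) = pure (w k) := by
            have hins : insert (w k) (E \ {w k}) = E := by
              rw [Set.insert_diff_singleton, Set.insert_eq_self.mpr hzE]
            have hE' : 𝓝[E \ {w k}] (w k) = ⊥ := by
              rw [hzx]
              exact (hxI (k - n)).2
            calc 𝓝[E] (w k) = 𝓝[insert (w k) (E \ {w k})] (w k) := by rw [hins]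
              _ = pure (w k) ⊔ 𝓝[E \ {w k}] (w k) := nhdsWithin_insert _ _
              _ = pure (w k) := by rw [hE', sup_bot_eq]
          rw [h1, h2]
          simp
      exact (tendsto_pure_nhds f0 z).mono_left hle
    · by_cases hzp : z = p
      · subst hzp
        rw [Metric.continuousWithinAt_iff]
        intro ε hε
        have hFnb : Fᶜ ∈ 𝓝 z := hFc.isOpen_compl.mem_nhds hpF
        obtain ⟨δ₁, hδ₁, hball⟩ := Metric.mem_nhds_iff.mp hFnb
        refine ⟨min ε δ₁, lt_min hε hδ₁, ?_⟩
        intro v hv hdist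
        rw [hf0id z hzw]
        by_cases hvw : v ∈ Set.range w
        · obtain ⟨k, rfl⟩ := hvw
          have hvF : w k ∉ F := by
            apply hball
            rw [Metric.mem_ball]
            exact lt_of_lt_of_le hdist (min_le_right _ _)
          have hk : n ≤ k := by
            by_contra h
            have hkn : k < n := not_le.mp h
            exact hvF (by rw [hw_lt k hkn]; exact hyF _)
          rw [hf0w k, hw_ge (k + n) (by omega)]
          rw [hw_ge k hk] at hdist
          calc dist (x (k + n - n)) z ≤ dist (x (k - n)) z := hmono _ _ (by omega)
            _ < min ε δ₁ := hdist
            _ ≤ ε := min_le_left _ _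
        · rw [hf0id v hvw]
          exact lt_of_lt_of_le hdist (min_le_left _ _)
      · -- locally identity
        have hzx : z ∉ insert p (Set.range x) := by
          rintro (h | h)
          · exact hzp h
          · exact hzw (hrw ▸ Or.inr h)
        have hzF : z ∉ F := fun h => hzw (hrw ▸ Or.inl h)
        have hU : (insert p (Set.range x))ᶜ ∩ Fᶜ ∈ 𝓝 z :=
          Filter.inter_mem (hclosedT.isOpen_compl.mem_nhds hzx)
            (hFc.isOpen_compl.mem_nhds hzF)
        have heq : f0 =ᶠ[𝓝[E ∪ F] z] id := by
          apply Filter.eventuallyEq_of_mem (mem_nhdsWithin_of_mem_nhds hU)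
          intro v hv
          have hvw : v ∉ Set.range w := by
            rw [hrw]
            rintro (h | h)
            · exact hv.2 h
            · exact hv.1 (Set.mem_insert_of_mem _ h)
          exact hf0id v hvw
        exact (continuousWithinAt_id).congr_of_eventuallyEq heq (hf0id z hzw)
  -- assemble the homeomorphism
  haveI : CompactSpace ↥(E ∪ F) :=
    isCompact_iff_compactSpace.mp ((hE.union hFc).isCompact)
  let e : ↥(E ∪ F) ≃ ↥E :=
    { toFun := fun a => ⟨f0 a.1, hf0mem a.1 a.2⟩
      invFun := fun b => ⟨g0 b.1, hg0mem b.1 b.2⟩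
      left_inv := fun a => Subtype.ext (hgf a.1)
      right_inv := fun b => Subtype.ext (hfg b.1 b.2) }
  have hce : Continuous e :=
    (continuousOn_iff_continuous_restrict.mp hcont).subtype_mk _
  exact ⟨hce.homeoOfEquivCompactToT2⟩

/-- If `𝓔` is a closed totally disconnected subset of the 2-sphere with infinitely many
isolated points, and `𝓕 ⊆ S² \ 𝓔` is finite, then `𝓔 ∪ 𝓕` is homeomorphic to `𝓔`. -/
theorem union_finite_homeomorph_self
    (E F : Set (Metric.sphere (0 : EuclideanSpace ℝ (Fin 3)) 1))
    (hE : IsClosed E) (htd : IsTotallyDisconnected E)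
    (hiso : {x | x ∈ E ∧ 𝓝[E \ {x}] x = ⊥}.Infinite)
    (hF : F.Finite) (hdisj : F ⊆ Eᶜ) :
    Nonempty (↥(E ∪ F) ≃ₜ ↥E) := by
  exact union_finite_homeomorph_self_aux E F hE hiso hF hdisj
end
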